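/- Let y, z : ℤ → ℝ be sequences of positive reals satisfying the coupled q-Painlevé III recurrences y_{n+3} z_n (1/z_{n+2} + 1)(1/y_{n+1} + 1) = (y_{n+2} + 1)(z_{n+1} + 1) and z_{n+3} y_n (1/y_{n+2} + 1)(1/z_{n+1} + 1) = (z_{n+2} + 1)(y_{n+1} + 1) for all n ∈ ℤ. Then the quantity v_n := z_{n+2} (1/y_{n+1} + 1) / (y_n (1/z_{n+1} + 1)) is a conserved quantity, i.e., v_{n+1} = v_n for all n ∈ ℤ. -/

import Mathlib

/-- For positive solutions of the coupled q-Painlevé III recurrences,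
`v n := z (n+2) * (1/y (n+1) + 1) / (y n * (1/z (n+1) + 1))` is conserved. -/
theorem qPIII_conserved_v
    (y z : ℤ → ℝ) (hy : ∀ n : ℤ, 0 < y n) (hz : ∀ n : ℤ, 0 < z n)
    (hrec₁ : ∀ n : ℤ,
      y (n + 3) * z n * (1 / z (n + 2) + 1) * (1 / y (n + 1) + 1) =
        (y (n + 2) + 1) * (z (n + 1) + 1))
    (hrec₂ : ∀ n : ℤ,
      z (n + 3) * y n * (1 / y (n + 2) + 1) * (1 / z (n + 1) + 1) =
        (z (n + 2) + 1) * (y (n + 1) + 1)) :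
    ∀ n : ℤ,
      z (n + 1 + 2) * (1 / y (n + 1 + 1) + 1) / (y (n + 1) * (1 / z (n + 1 + 1) + 1)) =
        z (n + 2) * (1 / y (n + 1) + 1) / (y n * (1 / z (n + 1) + 1)) := by
  intro n
  have h := hrec₂ n
  have e1 : n + 1 + 2 = n + 3 := by ring
  have e2 : n + 1 + 1 = n + 2 := by ring
  rw [e1, e2]
  have h0 := (hy n).ne'
  have h1 := (hy (n+1)).ne'
  have h2 := (hy (n+2)).ne'
  have h3 := (hz (n+1)).ne'
  have h4 := (hz (n+2)).ne'
  have h5 := (hz (n+3)).ne'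
  have h6 : (1 : ℝ) + z (n+1) ≠ 0 := by nlinarith [hz (n+1)]
  have h7 : (1 : ℝ) + z (n+2) ≠ 0 := by nlinarith [hz (n+2)]
  have h8 : (1 : ℝ) + y (n+1) ≠ 0 := by nlinarith [hy (n+1)]
  have h9 : (1 : ℝ) + y (n+2) ≠ 0 := by nlinarith [hy (n+2)]
  field_simp at h ⊢
  linear_combination h
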